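/- Under the setting below, for every reference point z ∈ 𝒳, every α ≥ 0, and every x ∈ 𝒪, the conceptual surrogate satisfies the two-sided bound: f(x) + ((α − τ)/2)‖x − z‖² ≤ E_{ε∼P_ε}[F̃_α(x, ε; z)] ≤ f(x) + ((α + τ)/2)‖x − z‖², where τ = L_φ(L_c + ℓ L_q); moreover F̃_α(z, ε; z) = φ(z, c(z)+Q(z)ε) for every ε, and for α > 0 the function F̃_α(·, ε; z) is α-strongly convex. (Proposition 4.) -/

import Mathlib

open MeasureTheory
open scoped RealInnerProductSpace

noncomputable section

/-- The continuous linear map `ℝ^d → ℝ^ℓ` determined by its `ℓ` rows (as functionals). -/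
def rowCLM {d l : ℕ} (rows : Fin l → (EuclideanSpace ℝ (Fin d) →L[ℝ] ℝ)) :
    EuclideanSpace ℝ (Fin d) →L[ℝ] EuclideanSpace ℝ (Fin l) :=
  (((EuclideanSpace.equiv (Fin l) ℝ).symm :
      (Fin l → ℝ) →L[ℝ] EuclideanSpace ℝ (Fin l))).comp (ContinuousLinearMap.pi rows)

/-- `Q(x)`, the `ℓ×ℓ` matrix whose rows are `q_1(x)ᵀ, …, q_ℓ(x)ᵀ`, viewed as a linear map. -/
def Qop {d l : ℕ} (q : Fin l → EuclideanSpace ℝ (Fin d) → EuclideanSpace ℝ (Fin l))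
    (x : EuclideanSpace ℝ (Fin d)) :
    EuclideanSpace ℝ (Fin l) →L[ℝ] EuclideanSpace ℝ (Fin l) :=
  rowCLM (fun j => innerSL ℝ (q j x))

/-- `G(z,ε)`, the `ℓ×d` matrix whose `j`-th row is `εᵀ∇q_j(z)`. -/
def Gop {d l : ℕ} (q : Fin l → EuclideanSpace ℝ (Fin d) → EuclideanSpace ℝ (Fin l))
    (z : EuclideanSpace ℝ (Fin d)) (ε : EuclideanSpace ℝ (Fin l)) :
    EuclideanSpace ℝ (Fin d) →L[ℝ] EuclideanSpace ℝ (Fin l) :=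
  rowCLM (fun j => (innerSL ℝ ε).comp (fderiv ℝ (q j) z))

/-- The conceptual surrogate
`F̃_α(x,ε;z) = φ(x, c(z)+∇c(z)(x−z)+Q(z)ε+G(z,ε)(x−z)) + (α/2)‖x−z‖²`. -/
def Ftil {d l : ℕ} (φ : EuclideanSpace ℝ (Fin d) → EuclideanSpace ℝ (Fin l) → ℝ)
    (c : EuclideanSpace ℝ (Fin d) → EuclideanSpace ℝ (Fin l))
    (q : Fin l → EuclideanSpace ℝ (Fin d) → EuclideanSpace ℝ (Fin l))
    (α : ℝ) (z : EuclideanSpace ℝ (Fin d)) (ε : EuclideanSpace ℝ (Fin l))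
    (x : EuclideanSpace ℝ (Fin d)) : ℝ :=
  φ x (c z + fderiv ℝ c z (x - z) + Qop q z ε + Gop q z ε (x - z)) + α / 2 * ‖x - z‖ ^ 2

open Set in
lemma taylor_half {E F : Type*} [NormedAddCommGroup E] [NormedSpace ℝ E]
    [NormedAddCommGroup F] [NormedSpace ℝ F]
    {g : E → F} {O : Set E} (hconv : Convex ℝ O)
    (hdiff : ∀ y ∈ O, HasFDerivAt g (fderiv ℝ g y) y)
    {L : ℝ} (hL : ∀ a ∈ O, ∀ b ∈ O, ‖fderiv ℝ g a - fderiv ℝ g b‖ ≤ L * ‖a - b‖)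
    {z x : E} (hz : z ∈ O) (hx : x ∈ O) :
    ‖g x - g z - fderiv ℝ g z (x - z)‖ ≤ L / 2 * ‖x - z‖ ^ 2 := by
  set v := x - z with hv
  set h : ℝ → F := fun t => g (z + t • v) - t • fderiv ℝ g z v - g z with hh
  have hmem : ∀ t ∈ Icc (0:ℝ) 1, z + t • v ∈ O := by
    intro t ht
    have h1 : (0:ℝ) ≤ 1 - t := by linarith [ht.2]
    have := hconv hz hx h1 ht.1 (by ring)
    have heq : z + t • v = (1 - t) • z + t • x := by
      rw [hv]; module
    rwa [heq]
  have hderiv : ∀ t ∈ Icc (0:ℝ) 1,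
      HasDerivAt h ((fderiv ℝ g (z + t • v) - fderiv ℝ g z) v) t := by
    intro t ht
    have hγ : HasDerivAt (fun t : ℝ => z + t • v) v t := by
      simpa using ((hasDerivAt_id t).smul_const v).const_add z
    have h1 : HasDerivAt (fun t => g (z + t • v)) (fderiv ℝ g (z + t • v) v) t :=
      (hdiff _ (hmem t ht)).comp_hasDerivAt t hγ
    have h2 : HasDerivAt (fun t : ℝ => t • fderiv ℝ g z v) (fderiv ℝ g z v) t := by
      simpa using (hasDerivAt_id t).smul_const (fderiv ℝ g z v)
    simpa [hh, ContinuousLinearMap.sub_apply] using (h1.sub h2).sub_const (g z)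
  have key := image_norm_le_of_norm_deriv_right_le_deriv_boundary
    (f := h) (f' := fun t => (fderiv ℝ g (z + t • v) - fderiv ℝ g z) v) (a := 0) (b := 1)
    (B := fun t => L / 2 * t ^ 2 * ‖v‖ ^ 2) (B' := fun t => L * t * ‖v‖ ^ 2)
    (fun t ht => (hderiv t ht).continuousAt.continuousWithinAt)
    (fun t ht => (hderiv t (Ico_subset_Icc_self ht)).hasDerivWithinAt)
    (by simp [hh])
    (fun t => by
      simpa using (((hasDerivAt_pow 2 t).const_mul (L / 2)).mul_const (‖v‖ ^ 2)).congr_deriv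
        (by ring))
    (fun t ht => by
      have h1 := hL _ (hmem t (Ico_subset_Icc_self ht)) _ hz
      have h2 : ‖(fderiv ℝ g (z + t • v) - fderiv ℝ g z) v‖ ≤
          ‖fderiv ℝ g (z + t • v) - fderiv ℝ g z‖ * ‖v‖ :=
        (fderiv ℝ g (z + t • v) - fderiv ℝ g z).le_opNorm v
      have h3 : ‖z + t • v - z‖ = t * ‖v‖ := by
        rw [add_sub_cancel_left, norm_smul, Real.norm_eq_abs, abs_of_nonneg ht.1]
      calc ‖(fderiv ℝ g (z + t • v) - fderiv ℝ g z) v‖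
          ≤ ‖fderiv ℝ g (z + t • v) - fderiv ℝ g z‖ * ‖v‖ := h2
        _ ≤ L * ‖z + t • v - z‖ * ‖v‖ := mul_le_mul_of_nonneg_right h1 (norm_nonneg _)
        _ = L * t * ‖v‖ ^ 2 := by rw [h3]; ring)
    (right_mem_Icc.2 zero_le_one)
  have hzv : z + v = x := by rw [hv]; abel
  have h1eq : h 1 = g x - g z - fderiv ℝ g z v := by
    show g (z + (1:ℝ) • v) - (1:ℝ) • fderiv ℝ g z v - g z = _
    rw [one_smul, one_smul, hzv]; abel
  rw [h1eq] at key
  simpa using key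

lemma rowCLM_apply {d l : ℕ} (rows : Fin l → (EuclideanSpace ℝ (Fin d) →L[ℝ] ℝ))
    (u : EuclideanSpace ℝ (Fin d)) (j : Fin l) : rowCLM rows u j = rows j u := by
  simp [rowCLM]


/-- **Proposition 4.** Under Assumption 1, for every reference point `z ∈ 𝒳`, every `α ≥ 0`
and every `x ∈ 𝒪`, the conceptual surrogate satisfies the two-sided bound
`f(x) + ((α−τ)/2)‖x−z‖² ≤ E_ε[F̃_α(x,ε;z)] ≤ f(x) + ((α+τ)/2)‖x−z‖²` with
`τ = L_φ(L_c + ℓ L_q)`; moreover `F̃_α(z,ε;z) = φ(z, c(z)+Q(z)ε)` for every `ε`, and for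
`α > 0` the function `F̃_α(·,ε;z)` is `α`-strongly convex. -/

theorem conceptual_surrogate_properties {d l : ℕ}
    (X O : Set (EuclideanSpace ℝ (Fin d)))
    (hXO : X ⊆ O) (hXne : X.Nonempty) (hXcpt : IsCompact X) (hXconv : Convex ℝ X)
    (hOopen : IsOpen O) (hOconv : Convex ℝ O)
    (φ : EuclideanSpace ℝ (Fin d) → EuclideanSpace ℝ (Fin l) → ℝ)
    (Lφ Lc Lq : ℝ) (hLφ : 0 ≤ Lφ) (hLc : 0 ≤ Lc) (hLq : 0 ≤ Lq)
    (hφconv : ConvexOn ℝ (O ×ˢ (Set.univ : Set (EuclideanSpace ℝ (Fin l))))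
      (fun p => φ p.1 p.2))
    (hφlip : ∀ x ∈ O, ∀ y ∈ O, ∀ u v : EuclideanSpace ℝ (Fin l),
      |φ x u - φ y v| ≤ Lφ * Real.sqrt (‖x - y‖ ^ 2 + ‖u - v‖ ^ 2))
    (c : EuclideanSpace ℝ (Fin d) → EuclideanSpace ℝ (Fin l))
    (hc : ContDiffOn ℝ 1 c O)
    (hcJ : ∀ x ∈ O, ∀ y ∈ O, ‖fderiv ℝ c x - fderiv ℝ c y‖ ≤ Lc * ‖x - y‖)
    (q : Fin l → EuclideanSpace ℝ (Fin d) → EuclideanSpace ℝ (Fin l))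
    (hq : ∀ j, ContDiffOn ℝ 1 (q j) O)
    (hqJ : ∀ j, ∀ x ∈ O, ∀ y ∈ O, ‖fderiv ℝ (q j) x - fderiv ℝ (q j) y‖ ≤ Lq * ‖x - y‖)
    (Pε : Measure (EuclideanSpace ℝ (Fin l))) [IsProbabilityMeasure Pε]
    (hmean : ∫ ε, ε ∂Pε = 0)
    (hsq : Integrable (fun ε : EuclideanSpace ℝ (Fin l) => ‖ε‖ ^ 2) Pε)
    (hcov : ∀ i j : Fin l, ∫ ε, ε i * ε j ∂Pε = if i = j then 1 else 0)
    (hintf : ∀ x ∈ O, Integrable (fun ε => φ x (c x + Qop q x ε)) Pε)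
    (hintF : ∀ z ∈ X, ∀ α : ℝ, ∀ x ∈ O, Integrable (fun ε => Ftil φ c q α z ε x) Pε)
    (τ : ℝ) (hτdef : τ = Lφ * (Lc + (l : ℝ) * Lq)) :
    ∀ z ∈ X, ∀ α : ℝ, 0 ≤ α →
      ((∀ x ∈ O,
          (∫ ε, φ x (c x + Qop q x ε) ∂Pε) + (α - τ) / 2 * ‖x - z‖ ^ 2 ≤
            ∫ ε, Ftil φ c q α z ε x ∂Pε ∧
          ∫ ε, Ftil φ c q α z ε x ∂Pε ≤
            (∫ ε, φ x (c x + Qop q x ε) ∂Pε) + (α + τ) / 2 * ‖x - z‖ ^ 2) ∧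
       (∀ ε, Ftil φ c q α z ε z = φ z (c z + Qop q z ε)) ∧
       (0 < α → ∀ ε, ConvexOn ℝ O (fun x => Ftil φ c q α z ε x - α / 2 * ‖x‖ ^ 2))) := by
  intro z hz α hα
  have hzO : z ∈ O := hXO hz
  have hcD : ∀ y ∈ O, HasFDerivAt c (fderiv ℝ c y) y := fun y hy =>
    ((hc.differentiableOn one_ne_zero).differentiableAt (hOopen.mem_nhds hy)).hasFDerivAt
  have hqD : ∀ j, ∀ y ∈ O, HasFDerivAt (q j) (fderiv ℝ (q j) y) y := fun j y hy =>
    (((hq j).differentiableOn one_ne_zero).differentiableAt (hOopen.mem_nhds hy)).hasFDerivAt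
  -- integrability of ‖ε‖ and moment computations
  have hnint : Integrable (fun ε : EuclideanSpace ℝ (Fin l) => ‖ε‖) Pε := by
    refine ((integrable_const (1:ℝ)).add hsq).mono'
      continuous_norm.aestronglyMeasurable ?_
    filter_upwards with ε
    rw [Real.norm_eq_abs, abs_of_nonneg (norm_nonneg _)]
    show ‖ε‖ ≤ 1 + ‖ε‖ ^ 2
    nlinarith [sq_nonneg (‖ε‖ - 1)]
  have hnorm_sq : ∀ ε : EuclideanSpace ℝ (Fin l), ‖ε‖ ^ 2 = ∑ i, ε i ^ 2 := by
    intro ε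
    rw [EuclideanSpace.norm_eq, Real.sq_sqrt (by positivity)]
    simp [Real.norm_eq_abs, sq_abs]
  have hcoord_int : ∀ i : Fin l,
      Integrable (fun ε : EuclideanSpace ℝ (Fin l) => ε i ^ 2) Pε := by
    intro i
    refine hsq.mono' (((EuclideanSpace.proj i).continuous.pow 2).aestronglyMeasurable) ?_
    filter_upwards with ε
    rw [Real.norm_eq_abs, abs_of_nonneg (sq_nonneg _), hnorm_sq ε]
    exact Finset.single_le_sum (fun j _ => sq_nonneg (ε j)) (Finset.mem_univ i)
  have hl2 : ∫ ε, ‖ε‖ ^ 2 ∂Pε = (l : ℝ) := by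
    calc ∫ ε, ‖ε‖ ^ 2 ∂Pε = ∫ ε, ∑ i, ε i ^ 2 ∂Pε := by
          exact integral_congr_ae (Filter.Eventually.of_forall fun ε => hnorm_sq ε)
      _ = ∑ i : Fin l, ∫ ε, ε i ^ 2 ∂Pε :=
          integral_finset_sum _ (fun i _ => hcoord_int i)
      _ = ∑ _i : Fin l, (1 : ℝ) := by
          refine Finset.sum_congr rfl fun i _ => ?_
          have := hcov i i
          simpa [sq] using this
      _ = (l : ℝ) := by simp
  set m : ℝ := ∫ ε, ‖ε‖ ∂Pε with hm
  have hm0 : 0 ≤ m := integral_nonneg fun ε => norm_nonneg _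
  have hexp : ∫ ε, (‖ε‖ - m) ^ 2 ∂Pε = (l : ℝ) - m ^ 2 := by
    have heq : (fun ε : EuclideanSpace ℝ (Fin l) => (‖ε‖ - m) ^ 2) =
        fun ε => (‖ε‖ ^ 2 - (2 * m) * ‖ε‖) + m ^ 2 := by
      funext ε; ring
    have hi1 : Integrable (fun ε : EuclideanSpace ℝ (Fin l) =>
        ‖ε‖ ^ 2 - (2 * m) * ‖ε‖) Pε := hsq.sub (hnint.const_mul (2 * m))
    have hi2 : Integrable (fun ε : EuclideanSpace ℝ (Fin l) => (2 * m) * ‖ε‖) Pε :=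
      hnint.const_mul (2 * m)
    rw [heq, integral_add hi1 (integrable_const _),
      integral_sub hsq hi2, integral_const_mul, integral_const]
    simp [hl2, ← hm]
    ring
  have hvar : 0 ≤ (l : ℝ) - m ^ 2 := hexp ▸ integral_nonneg fun ε => sq_nonneg _
  have hmle : m ≤ Real.sqrt l := by
    calc m = Real.sqrt (m ^ 2) := (Real.sqrt_sq hm0).symm
      _ ≤ Real.sqrt l := Real.sqrt_le_sqrt (by linarith)
  refine ⟨?_, ?_, ?_⟩
  · -- two-sided bound
    intro x hx
    set r := ‖x - z‖ ^ 2 with hr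
    have hr0 : 0 ≤ r := by positivity
    have hcT : ‖c z + fderiv ℝ c z (x - z) - c x‖ ≤ Lc / 2 * r := by
      have h1 := taylor_half hOconv hcD hcJ hzO hx
      have h2 : c z + fderiv ℝ c z (x - z) - c x =
          -(c x - c z - fderiv ℝ c z (x - z)) := by abel
      rw [h2, norm_neg, hr]; exact h1
    have hqT : ∀ j, ‖q j z + fderiv ℝ (q j) z (x - z) - q j x‖ ≤ Lq / 2 * r := by
      intro j
      have h1 := taylor_half hOconv (hqD j) (hqJ j) hzO hx
      have h2 : q j z + fderiv ℝ (q j) z (x - z) - q j x =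
          -(q j x - q j z - fderiv ℝ (q j) z (x - z)) := by abel
      rw [h2, norm_neg, hr]; exact h1
    have hQG : ∀ ε : EuclideanSpace ℝ (Fin l),
        ‖Qop q z ε + Gop q z ε (x - z) - Qop q x ε‖ ≤
          Real.sqrt l * (Lq / 2 * r * ‖ε‖) := by
      intro ε
      set M := Lq / 2 * r * ‖ε‖ with hM
      have hM0 : 0 ≤ M := by positivity
      have hcomp : ∀ j, ‖(Qop q z ε + Gop q z ε (x - z) - Qop q x ε) j‖ ≤ M := by
        intro j
        have hj : (Qop q z ε + Gop q z ε (x - z) - Qop q x ε) j =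
            ⟪q j z + fderiv ℝ (q j) z (x - z) - q j x, ε⟫ := by
          simp only [PiLp.sub_apply, PiLp.add_apply, Qop, Gop, rowCLM_apply,
            ContinuousLinearMap.comp_apply, innerSL_apply_apply, inner_add_left, inner_sub_left]
          rw [real_inner_comm ε ((fderiv ℝ (q j) z) (x - z))]
        rw [hj, Real.norm_eq_abs]
        calc |⟪q j z + fderiv ℝ (q j) z (x - z) - q j x, ε⟫|
            ≤ ‖q j z + fderiv ℝ (q j) z (x - z) - q j x‖ * ‖ε‖ :=
              abs_real_inner_le_norm _ _
          _ ≤ M := by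
              rw [hM]
              exact mul_le_mul_of_nonneg_right (hqT j) (norm_nonneg ε)
      rw [EuclideanSpace.norm_eq]
      have hsum : ∑ j, ‖(Qop q z ε + Gop q z ε (x - z) - Qop q x ε) j‖ ^ 2 ≤
          (l : ℝ) * M ^ 2 := by
        calc ∑ j, ‖(Qop q z ε + Gop q z ε (x - z) - Qop q x ε) j‖ ^ 2
            ≤ ∑ _j : Fin l, M ^ 2 :=
              Finset.sum_le_sum fun j _ =>
                pow_le_pow_left₀ (norm_nonneg _) (hcomp j) 2
          _ = (l : ℝ) * M ^ 2 := by simp [mul_comm]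
      calc Real.sqrt (∑ j, ‖(Qop q z ε + Gop q z ε (x - z) - Qop q x ε) j‖ ^ 2)
          ≤ Real.sqrt ((l : ℝ) * M ^ 2) := Real.sqrt_le_sqrt hsum
        _ = Real.sqrt l * M := by
            rw [Real.sqrt_mul (Nat.cast_nonneg l), Real.sqrt_sq hM0]
    set C1 : ℝ := Lφ * (Lc / 2 * r) with hC1
    set C2 : ℝ := Lφ * (Real.sqrt l * (Lq / 2 * r)) with hC2
    have hpt : ∀ ε, |Ftil φ c q α z ε x - α / 2 * r - φ x (c x + Qop q x ε)| ≤
        C1 + C2 * ‖ε‖ := by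
      intro ε
      have hF : Ftil φ c q α z ε x - α / 2 * r =
          φ x (c z + fderiv ℝ c z (x - z) + Qop q z ε + Gop q z ε (x - z)) := by
        rw [hr]; simp only [Ftil]; ring
      rw [hF]
      have hlip := hφlip x hx x hx
        (c z + fderiv ℝ c z (x - z) + Qop q z ε + Gop q z ε (x - z))
        (c x + Qop q x ε)
      have hred : Real.sqrt (‖x - x‖ ^ 2 +
          ‖c z + fderiv ℝ c z (x - z) + Qop q z ε + Gop q z ε (x - z) -
            (c x + Qop q x ε)‖ ^ 2) =
          ‖c z + fderiv ℝ c z (x - z) + Qop q z ε + Gop q z ε (x - z) -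
            (c x + Qop q x ε)‖ := by
        rw [sub_self, norm_zero]
        simpa using Real.sqrt_sq (norm_nonneg _)
      rw [hred] at hlip
      have hdecomp : c z + fderiv ℝ c z (x - z) + Qop q z ε + Gop q z ε (x - z) -
          (c x + Qop q x ε) =
          (c z + fderiv ℝ c z (x - z) - c x) +
            (Qop q z ε + Gop q z ε (x - z) - Qop q x ε) := by abel
      have huv : ‖c z + fderiv ℝ c z (x - z) + Qop q z ε + Gop q z ε (x - z) -
          (c x + Qop q x ε)‖ ≤ Lc / 2 * r + Real.sqrt l * (Lq / 2 * r * ‖ε‖) := by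
        rw [hdecomp]
        exact (norm_add_le _ _).trans (add_le_add hcT (hQG ε))
      calc |φ x (c z + fderiv ℝ c z (x - z) + Qop q z ε + Gop q z ε (x - z)) -
            φ x (c x + Qop q x ε)| ≤
          Lφ * ‖c z + fderiv ℝ c z (x - z) + Qop q z ε + Gop q z ε (x - z) -
            (c x + Qop q x ε)‖ := hlip
        _ ≤ Lφ * (Lc / 2 * r + Real.sqrt l * (Lq / 2 * r * ‖ε‖)) :=
            mul_le_mul_of_nonneg_left huv hLφ
        _ = C1 + C2 * ‖ε‖ := by rw [hC1, hC2]; ring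
    have hI1 : Integrable (fun ε => Ftil φ c q α z ε x) Pε := hintF z hz α x hx
    have hI2 : Integrable (fun ε => φ x (c x + Qop q x ε)) Pε := hintf x hx
    have hIa : Integrable (fun ε => Ftil φ c q α z ε x - α / 2 * r) Pε :=
      hI1.sub (integrable_const _)
    have hdiff_int : Integrable
        (fun ε => Ftil φ c q α z ε x - α / 2 * r - φ x (c x + Qop q x ε)) Pε :=
      hIa.sub hI2
    have hKint : Integrable (fun ε : EuclideanSpace ℝ (Fin l) => C1 + C2 * ‖ε‖) Pε :=
      (integrable_const C1).add (hnint.const_mul C2)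
    have habs : |∫ ε, (Ftil φ c q α z ε x - α / 2 * r - φ x (c x + Qop q x ε)) ∂Pε| ≤
        C1 + C2 * m := by
      calc |∫ ε, (Ftil φ c q α z ε x - α / 2 * r - φ x (c x + Qop q x ε)) ∂Pε|
          ≤ ∫ ε, |Ftil φ c q α z ε x - α / 2 * r - φ x (c x + Qop q x ε)| ∂Pε := by
            simpa [Real.norm_eq_abs] using
              norm_integral_le_integral_norm
                (fun ε => Ftil φ c q α z ε x - α / 2 * r - φ x (c x + Qop q x ε)) (μ := Pε)
        _ ≤ ∫ ε, (C1 + C2 * ‖ε‖) ∂Pε :=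
            integral_mono hdiff_int.abs hKint hpt
        _ = C1 + C2 * m := by
            rw [integral_add (integrable_const C1) (hnint.const_mul C2),
              integral_const_mul C2 (fun ε => ‖ε‖), integral_const]
            simp [← hm]
    have hsplit : ∫ ε, (Ftil φ c q α z ε x - α / 2 * r - φ x (c x + Qop q x ε)) ∂Pε =
        (∫ ε, Ftil φ c q α z ε x ∂Pε) - α / 2 * r - ∫ ε, φ x (c x + Qop q x ε) ∂Pε := by
      rw [integral_sub hIa hI2, integral_sub hI1 (integrable_const _), integral_const]
      simp
    rw [hsplit] at habs
    have hC20 : 0 ≤ C2 := by rw [hC2]; positivity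
    have hss : Real.sqrt l * Real.sqrt l = (l : ℝ) := Real.mul_self_sqrt (Nat.cast_nonneg l)
    have hfin : C1 + C2 * m ≤ τ / 2 * r := by
      have h1 : C2 * m ≤ C2 * Real.sqrt l := mul_le_mul_of_nonneg_left hmle hC20
      have h2 : C1 + C2 * Real.sqrt l = τ / 2 * r := by
        rw [hC1, hC2, hτdef]
        linear_combination (Lφ * (Lq / 2 * r)) * hss
      linarith
    have habs' := abs_le.mp (habs.trans hfin)
    constructor
    · linarith [habs'.1]
    · linarith [habs'.2]
  · -- value at the reference point
    intro ε
    simp only [Ftil, sub_self, map_zero, add_zero, norm_zero]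
    norm_num
  · -- strong convexity
    intro _ ε
    set T : EuclideanSpace ℝ (Fin d) →L[ℝ] EuclideanSpace ℝ (Fin l) :=
      fderiv ℝ c z + Gop q z ε with hT
    set w : EuclideanSpace ℝ (Fin l) := c z + Qop q z ε - T z with hw
    have hu : ∀ y, c z + fderiv ℝ c z (y - z) + Qop q z ε + Gop q z ε (y - z) = w + T y := by
      intro y
      rw [hw, hT]
      simp only [ContinuousLinearMap.add_apply, _root_.map_sub]
      abel
    have haff : ConvexOn ℝ O (fun y => φ y (w + T y)) := by
      refine ⟨hOconv, fun p hp p' hp' a b ha hb hab => ?_⟩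
      have hkey : w + T (a • p + b • p') = a • (w + T p) + b • (w + T p') := by
        rw [map_add, _root_.map_smul, _root_.map_smul, smul_add, smul_add]
        conv_lhs => rw [← Convex.combo_self hab w]
        abel
      have hmem1 : ((p, w + T p) :
          EuclideanSpace ℝ (Fin d) × EuclideanSpace ℝ (Fin l)) ∈ O ×ˢ Set.univ :=
        ⟨hp, Set.mem_univ _⟩
      have hmem2 : ((p', w + T p') :
          EuclideanSpace ℝ (Fin d) × EuclideanSpace ℝ (Fin l)) ∈ O ×ˢ Set.univ :=
        ⟨hp', Set.mem_univ _⟩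
      have h := hφconv.2 hmem1 hmem2 ha hb hab
      simp only [Prod.smul_mk, Prod.mk_add_mk, smul_eq_mul] at h
      rw [← hkey] at h
      exact h
    have hlin : ConvexOn ℝ O (fun y : EuclideanSpace ℝ (Fin d) =>
        α / 2 * ‖z‖ ^ 2 - α * ⟪y, z⟫) := by
      refine ⟨hOconv, fun p hp p' hp' a b ha hb hab => ?_⟩
      simp only [smul_eq_mul, inner_add_left, real_inner_smul_left]
      apply le_of_eq
      linear_combination (α / 2 * ‖z‖ ^ 2) * hab.symm
    have hfun : (fun y => Ftil φ c q α z ε y - α / 2 * ‖y‖ ^ 2) =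
        fun y => φ y (w + T y) + (α / 2 * ‖z‖ ^ 2 - α * ⟪y, z⟫) := by
      funext y
      simp only [Ftil]
      rw [hu y, norm_sub_sq_real]
      ring
    rw [hfun]
    exact haff.add hlin

end
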